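/- Let A be a nonnegative n×n matrix and let X₁, X₂ ≥ 0 be nonzero vectors satisfying A·X₁ ≤ (1/β₁)·X₁ and A·X₂ ≤ (1/β₂)·X₂ componentwise, with β₁, β₂ > 0. Then for every α ∈ [0,1], the componentwise product X₃ with X₃(i) = X₁(i)^α · X₂(i)^{1−α} satisfies A·X₃ ≤ (1/β₃)·X₃ where β₃ = β₁^α · β₂^{1−α}. (Log-convexity of the Collatz–Wielandt feasibility region.) -/

import Mathlib

/-- Hölder: `∑ p^α q^(1-α) ≤ (∑ p)^α (∑ q)^(1-α)` for `0 < α < 1`. -/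
lemma holder_geom_mean {ι : Type*} (s : Finset ι) (p q : ι → ℝ) (hp : ∀ i, 0 ≤ p i)
    (hq : ∀ i, 0 ≤ q i) {α : ℝ} (h0 : 0 < α) (h1 : α < 1) :
    ∑ i ∈ s, p i ^ α * q i ^ (1 - α) ≤
      (∑ i ∈ s, p i) ^ α * (∑ i ∈ s, q i) ^ (1 - α) := by
  have h1' : 0 < 1 - α := by linarith
  have hconj : Real.HolderConjugate α⁻¹ (1 - α)⁻¹ := by
    constructor
    · simp [inv_inv]
    · positivity
    · positivity
  have key := Real.inner_le_Lp_mul_Lq_of_nonneg hconj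
    (f := fun i => p i ^ α) (g := fun i => q i ^ (1 - α)) (s := s)
    (fun i _ => Real.rpow_nonneg (hp i) _) (fun i _ => Real.rpow_nonneg (hq i) _)
  have e1 : ∀ i, (p i ^ α) ^ (α⁻¹ : ℝ) = p i := fun i => by
    rw [← Real.rpow_mul (hp i), mul_inv_cancel₀ h0.ne', Real.rpow_one]
  have e2 : ∀ i, (q i ^ (1 - α)) ^ ((1 - α)⁻¹ : ℝ) = q i := fun i => by
    rw [← Real.rpow_mul (hq i), mul_inv_cancel₀ h1'.ne', Real.rpow_one]
  simp only [e1, e2, one_div, inv_inv] at key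
  exact key

/-- Log-convexity of the Collatz–Wielandt feasibility region: componentwise
geometric means of feasible vectors are feasible for the geometric mean of
the thresholds. -/
theorem stmt_8 (n : ℕ) (A : Matrix (Fin n) (Fin n) ℝ) (hA : ∀ i j, 0 ≤ A i j)
    (X₁ X₂ : Fin n → ℝ) (h₁0 : 0 ≤ X₁) (h₂0 : 0 ≤ X₂) (h₁ne : X₁ ≠ 0) (h₂ne : X₂ ≠ 0)
    (β₁ β₂ : ℝ) (hβ₁ : 0 < β₁) (hβ₂ : 0 < β₂)
    (hf₁ : A.mulVec X₁ ≤ β₁⁻¹ • X₁) (hf₂ : A.mulVec X₂ ≤ β₂⁻¹ • X₂)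
    (α : ℝ) (hα : α ∈ Set.Icc (0 : ℝ) 1) :
    A.mulVec (fun i => X₁ i ^ α * X₂ i ^ (1 - α)) ≤
      (β₁ ^ α * β₂ ^ (1 - α))⁻¹ • fun i => X₁ i ^ α * X₂ i ^ (1 - α) := by
  obtain ⟨hα0, hα1⟩ := hα
  rcases hα0.eq_or_lt with rfl | h0
  · simpa using hf₂
  rcases hα1.eq_or_lt with rfl | h1
  · simpa using hf₁
  have h1' : 0 < 1 - α := by linarith
  intro i
  have hsum : ∀ j, A i j * (X₁ j ^ α * X₂ j ^ (1 - α)) =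
      (A i j * X₁ j) ^ α * (A i j * X₂ j) ^ (1 - α) := by
    intro j
    rw [Real.mul_rpow (hA i j) (h₁0 j), Real.mul_rpow (hA i j) (h₂0 j)]
    have : A i j ^ α * A i j ^ (1 - α) = A i j := by
      rw [← Real.rpow_add' (hA i j) (by norm_num)]
      simp
    rw [show A i j ^ α * X₁ j ^ α * (A i j ^ (1 - α) * X₂ j ^ (1 - α)) =
      A i j ^ α * A i j ^ (1 - α) * (X₁ j ^ α * X₂ j ^ (1 - α)) by ring, this]
  have key : (A.mulVec fun j => X₁ j ^ α * X₂ j ^ (1 - α)) i ≤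
      ((A.mulVec X₁) i) ^ α * ((A.mulVec X₂) i) ^ (1 - α) := by
    simp only [Matrix.mulVec, dotProduct]
    calc ∑ j, A i j * (X₁ j ^ α * X₂ j ^ (1 - α))
        = ∑ j, (A i j * X₁ j) ^ α * (A i j * X₂ j) ^ (1 - α) := by
          exact Finset.sum_congr rfl fun j _ => hsum j
      _ ≤ (∑ j, A i j * X₁ j) ^ α * (∑ j, A i j * X₂ j) ^ (1 - α) :=
          holder_geom_mean _ _ _ (fun j => mul_nonneg (hA i j) (h₁0 j))
            (fun j => mul_nonneg (hA i j) (h₂0 j)) h0 h1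
  refine key.trans ?_
  have hm1 : (0 : ℝ) ≤ (A.mulVec X₁) i := by
    simp only [Matrix.mulVec, dotProduct]
    exact Finset.sum_nonneg fun j _ => mul_nonneg (hA i j) (h₁0 j)
  have hm2 : (0 : ℝ) ≤ (A.mulVec X₂) i := by
    simp only [Matrix.mulVec, dotProduct]
    exact Finset.sum_nonneg fun j _ => mul_nonneg (hA i j) (h₂0 j)
  have b1 : ((A.mulVec X₁) i) ^ α ≤ (β₁⁻¹ * X₁ i) ^ α :=
    Real.rpow_le_rpow hm1 (hf₁ i) hα0
  have b2 : ((A.mulVec X₂) i) ^ (1 - α) ≤ (β₂⁻¹ * X₂ i) ^ (1 - α) :=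
    Real.rpow_le_rpow hm2 (hf₂ i) h1'.le
  calc ((A.mulVec X₁) i) ^ α * ((A.mulVec X₂) i) ^ (1 - α)
      ≤ (β₁⁻¹ * X₁ i) ^ α * (β₂⁻¹ * X₂ i) ^ (1 - α) :=
        mul_le_mul b1 b2 (Real.rpow_nonneg hm2 _) (Real.rpow_nonneg (mul_nonneg (inv_nonneg.mpr hβ₁.le) (h₁0 i)) _)
    _ = (β₁ ^ α * β₂ ^ (1 - α))⁻¹ * (X₁ i ^ α * X₂ i ^ (1 - α)) := by
        rw [Real.mul_rpow (by positivity) (h₁0 i), Real.mul_rpow (by positivity) (h₂0 i),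
          mul_inv, ← Real.inv_rpow hβ₁.le, ← Real.inv_rpow hβ₂.le]
        ring
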